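/- Let a_1,…,a_n be positive integers and b a positive integer. Define the set S = {(x,f) ∈ {0,1}^n × ℝ^{n+1} : ∑_{j=0}^n f_j = b, f_0 = 0, and −a_j x_j ≤ f_j ≤ a_j x_j for all j ∈ {1,…,n}}. Then there exists a subset J ⊆ {1,…,n} with ∑_{j∈J} a_j = b if and only if there exists (x,f) ∈ S with ∑_{j=1}^n a_j x_j − ∑_{j=1}^n f_j ≤ 0. (This is the correctness of the reduction from Subset-Sum used to prove NP-hardness of optimizing a linear function over S.) -/

import Mathlib

open scoped BigOperators

/-- correctness of the reduction from Subset-Sum to optimizing a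
linear function over the node-based set `S`. -/
theorem subset_sum_reduction (n : ℕ) (a : Fin n → ℤ) (ha : ∀ j, 0 < a j)
    (b : ℤ) (hb : 0 < b)
    (S : Set ((Fin n → ℝ) × (Fin (n + 1) → ℝ)))
    (hS : S = {p | (∀ j, p.1 j = 0 ∨ p.1 j = 1) ∧
      (∑ j, p.2 j) = (b : ℝ) ∧ p.2 0 = 0 ∧
      ∀ j : Fin n, -((a j : ℝ) * p.1 j) ≤ p.2 j.succ ∧ p.2 j.succ ≤ (a j : ℝ) * p.1 j}) :
    (∃ J : Finset (Fin n), ∑ j ∈ J, a j = b) ↔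
      (∃ p ∈ S, (∑ j, (a j : ℝ) * p.1 j) - (∑ j : Fin n, p.2 j.succ) ≤ 0) := by
  subst hS
  constructor
  · rintro ⟨J, hJ⟩
    refine ⟨(fun j => if j ∈ J then 1 else 0,
      fun i => Fin.cases 0 (fun j => if j ∈ J then (a j : ℝ) else 0) i), ⟨?_, ?_, by simp, ?_⟩, ?_⟩
    · intro j; by_cases h : j ∈ J <;> simp [h]
    · rw [Fin.sum_univ_succ]
      simp only [Fin.cases_zero, Fin.cases_succ, zero_add]
      rw [Finset.sum_ite_mem, Finset.univ_inter]
      exact_mod_cast congrArg (Int.cast : ℤ → ℝ) hJ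
    · intro j
      have hpos : (0:ℝ) ≤ (a j : ℝ) := by exact_mod_cast (ha j).le
      by_cases h : j ∈ J <;> simp [h, hpos]
    · have : ∀ j : Fin n, (a j : ℝ) * (if j ∈ J then (1:ℝ) else 0)
          = Fin.cases (0:ℝ) (fun j => if j ∈ J then (a j : ℝ) else 0) j.succ := by
        intro j; by_cases h : j ∈ J <;> simp [h]
      rw [Finset.sum_congr rfl fun j _ => this j]
      simp
  · rintro ⟨p, ⟨hx, hsum, h0, hbd⟩, hobj⟩
    have hle : ∀ j ∈ Finset.univ, p.2 (Fin.succ j) ≤ (a j : ℝ) * p.1 j :=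
      fun j _ => (hbd j).2
    have hge : (∑ j : Fin n, (a j : ℝ) * p.1 j) ≤ ∑ j : Fin n, p.2 j.succ := by
      linarith
    have heq : (∑ j : Fin n, p.2 j.succ) = ∑ j : Fin n, (a j : ℝ) * p.1 j :=
      le_antisymm (Finset.sum_le_sum hle) hge
    have hsum' : (∑ j : Fin n, (a j : ℝ) * p.1 j) = (b : ℝ) := by
      rw [Fin.sum_univ_succ, h0, zero_add] at hsum
      rw [← heq]; exact hsum
    refine ⟨Finset.univ.filter (fun j => p.1 j = 1), ?_⟩
    have : ((∑ j ∈ Finset.univ.filter (fun j => p.1 j = 1), a j : ℤ) : ℝ) = (b : ℝ) := by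
      push_cast
      rw [← hsum']
      rw [Finset.sum_filter]
      apply Finset.sum_congr rfl
      intro j _
      rcases hx j with h | h <;> simp [h]
    exact_mod_cast this
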